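/- Let q = (q_0,…,q_n) be a weight and p = (2q_0,…,2q_n). If q_j is odd, then for any w ∈ ℝ^{n+1}∖{0} with w_j ≠ 0, the set of ∼_p-equivalence classes of points z with z ∼_q w has exactly two elements; i.e., the identity-induced map ℝP(p) → ℝP(q) is exactly two-to-one on the set where the j-th coordinate is nonzero. -/

import Mathlib

/-- Weighted equivalence relation on `ℝ^{n+1}`. -/
def wrel {n : ℕ} (p : Fin (n + 1) → ℕ) (z w : Fin (n + 1) → ℝ) : Prop :=
  ∃ l : ℝ, l ≠ 0 ∧ ∀ i, w i = l ^ p i * z i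

lemma sqrt_pow_two_mul (a : ℝ) (ha : 0 < a) (k : ℕ) :
    Real.sqrt a ^ (2 * k) = a ^ k := by
  rw [pow_mul, Real.sq_sqrt ha.le]

/-- Let `q` be a weight and `p = 2q`.  If `q j` is odd, then for any `w ≠ 0` with
`w j ≠ 0`, the set of `∼_p`-classes of points `z` with `z ∼_q w` has exactly two
elements: the identity-induced map `ℝP(p) → ℝP(q)` is two-to-one where the `j`-th
coordinate is nonzero. -/
theorem two_to_one_on_nonzero_coord (n : ℕ) (q : Fin (n + 1) → ℕ) (hq : ∀ i, 0 < q i)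
    (j : Fin (n + 1)) (hodd : Odd (q j))
    (w : Fin (n + 1) → ℝ) (hw : w ≠ 0) (hwj : w j ≠ 0) :
    ∃ z₁ z₂ : Fin (n + 1) → ℝ,
      wrel q z₁ w ∧ wrel q z₂ w ∧ ¬ wrel (fun i => 2 * q i) z₁ z₂ ∧
      ∀ z : Fin (n + 1) → ℝ, wrel q z w →
        wrel (fun i => 2 * q i) z z₁ ∨ wrel (fun i => 2 * q i) z z₂ := by
  refine ⟨w, fun i => (-1 : ℝ) ^ q i * w i, ⟨1, one_ne_zero, by simp⟩,
    ⟨-1, by norm_num, fun i => ?_⟩, ?_, ?_⟩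
  · show w i = (-1 : ℝ) ^ q i * ((-1 : ℝ) ^ q i * w i)
    rw [← mul_assoc, ← pow_add, Even.neg_one_pow ⟨q i, rfl⟩, one_mul]
  · rintro ⟨l, hl, h⟩
    have hj := h j
    simp only at hj
    have hne : ((-1 : ℝ)) ^ q j = -1 := hodd.neg_one_pow
    rw [hne] at hj
    have h1 : l ^ (2 * q j) = -1 := by
      have h' : l ^ (2 * q j) * w j = (-1) * w j := by linarith
      exact mul_right_cancel₀ hwj h'
    have h2 : (0:ℝ) ≤ l ^ (2 * q j) := by
      rw [mul_comm, pow_mul]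
      positivity
    linarith [h1 ▸ h2]
  · rintro z ⟨l, hl, h⟩
    rcases hl.lt_or_gt with hneg | hpos
    · right
      refine ⟨Real.sqrt (-l), ne_of_gt (Real.sqrt_pos.mpr (by linarith)), fun i => ?_⟩
      show (-1 : ℝ) ^ q i * w i = _
      rw [sqrt_pow_two_mul (-l) (by linarith) (q i), h i, neg_pow]
      ring
    · left
      refine ⟨Real.sqrt l, ne_of_gt (Real.sqrt_pos.mpr hpos), fun i => ?_⟩
      rw [sqrt_pow_two_mul l hpos (q i), h i]
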